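/- arXiv:2112.11595 — 4 statements merged into one kernel-verified Lean document; each statement's English description precedes it below -/
import Mathlib

section
/- Let g(0)≠0 and suppose f(z) = z·g(z^{2l+1}) is pseudo-involutory for some integer l≥0. Then h(z) = z·g(z)^{2l+1} is also pseudo-involutory, and conversely. -/
open PowerSeries

open Finset

/-- Composition `f ∘ g` of formal power series (meaningful when the constant
coefficient of `g` is zero). -/
noncomputable def comp (f g : PowerSeries ℚ) : PowerSeries ℚ :=
  PowerSeries.mk fun n =>
    ∑ i ∈ Finset.range (n + 1), (PowerSeries.coeff i f) * (PowerSeries.coeff n (g ^ i))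

lemma coeff_comp (f g : PowerSeries ℚ) (n : ℕ) :
    coeff n (comp f g) = ∑ i ∈ range (n + 1), coeff i f * coeff n (g ^ i) := by
  simp [comp]

lemma coeff_pow_zero {c : PowerSeries ℚ} (hc : constantCoeff c = 0) {k i : ℕ} (h : k < i) :
    coeff k (c ^ i) = 0 := by
  have : (X : PowerSeries ℚ) ^ i ∣ c ^ i := pow_dvd_pow_of_dvd (X_dvd_iff.mpr hc) i
  exact X_pow_dvd_iff.mp this k h

lemma comp_X_right (f : PowerSeries ℚ) : comp f X = f := by
  ext n
  rw [coeff_comp]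
  rw [Finset.sum_eq_single n]
  · simp [coeff_X_pow]
  · intro i _ hne; simp [coeff_X_pow, Ne.symm hne]
  · intro h; exact absurd (Finset.self_mem_range_succ n) h

lemma comp_X_left {c : PowerSeries ℚ} (hc : constantCoeff c = 0) : comp X c = c := by
  ext n
  rw [coeff_comp]
  rcases Nat.eq_zero_or_pos n with rfl | hn
  · simp [hc]
  · rw [Finset.sum_eq_single 1]
    · simp
    · intro i _ hne; simp [PowerSeries.coeff_X, hne]
    · intro h
      exact absurd (Finset.mem_range.mpr (by omega)) h

lemma neg_comp (a c : PowerSeries ℚ) : comp (-a) c = -comp a c := by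
  ext n
  simp [coeff_comp, Finset.sum_neg_distrib, neg_mul]

lemma one_comp (c : PowerSeries ℚ) : comp 1 c = 1 := by
  ext n
  rw [coeff_comp, Finset.sum_eq_single 0]
  · simp
  · intro i _ hne
    simp [PowerSeries.coeff_one, hne]
  · intro h; exact absurd (Finset.mem_range.mpr (by omega)) h


lemma coeff_comp_stable {c : PowerSeries ℚ} (hc : constantCoeff c = 0) (f : PowerSeries ℚ)
    {k N : ℕ} (hk : k < N) :
    coeff k (comp f c) = ∑ i ∈ range N, coeff i f * coeff k (c ^ i) := by
  rw [coeff_comp]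
  apply Finset.sum_subset
  · intro x hx
    simp only [Finset.mem_range] at *
    omega
  · intro x _ hx
    simp only [Finset.mem_range, not_lt] at hx
    rw [coeff_pow_zero hc (by omega), mul_zero]

lemma coeff_comp_aeval (f : PowerSeries ℚ) {c : PowerSeries ℚ} (hc : constantCoeff c = 0)
    {k N : ℕ} (hk : k < N) :
    coeff k (comp f c) = coeff k (Polynomial.aeval c (trunc N f)) := by
  have hd : (trunc N f).natDegree < N := by
    by_cases h0 : trunc N f = 0
    · rw [h0]; simpa using hk.trans_le' (Nat.zero_le k)
    · exact (Polynomial.natDegree_lt_iff_degree_lt h0).mpr (degree_trunc_lt f N)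
  rw [Polynomial.aeval_eq_sum_range' hd, map_sum, coeff_comp_stable hc f hk]
  apply Finset.sum_congr rfl
  intro i hi
  rw [coeff_smul, smul_eq_mul, coeff_trunc, if_pos (Finset.mem_range.mp hi)]

lemma coeff_aeval_congr {c : PowerSeries ℚ} (hc : constantCoeff c = 0)
    {n : ℕ} {P Q : Polynomial ℚ} (h : ∀ k ≤ n, P.coeff k = Q.coeff k) :
    coeff n (Polynomial.aeval c P) = coeff n (Polynomial.aeval c Q) := by
  have hdvd : (Polynomial.X : Polynomial ℚ) ^ (n + 1) ∣ P - Q := by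
    rw [Polynomial.X_pow_dvd_iff]
    intro d hd
    simp [h d (by omega)]
  obtain ⟨R, hR⟩ := hdvd
  have : Polynomial.aeval c P - Polynomial.aeval c Q = c ^ (n + 1) * Polynomial.aeval c R := by
    rw [← map_sub, hR, map_mul, map_pow, Polynomial.aeval_X]
  have hz : coeff n (c ^ (n + 1) * Polynomial.aeval c R) = 0 := by
    have hdv : (X : PowerSeries ℚ) ^ (n + 1) ∣ c ^ (n + 1) * Polynomial.aeval c R :=
      Dvd.dvd.mul_right (pow_dvd_pow_of_dvd (X_dvd_iff.mpr hc) _) _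
    exact X_pow_dvd_iff.mp hdv n (by omega)
  have := congrArg (coeff n) this
  rw [map_sub, hz] at this
  linarith

lemma mul_comp {c : PowerSeries ℚ} (hc : constantCoeff c = 0) (a b : PowerSeries ℚ) :
    comp (a * b) c = comp a c * comp b c := by
  ext n
  rw [coeff_comp_aeval (a * b) hc (Nat.lt_succ_self n)]
  rw [coeff_aeval_congr hc (Q := trunc (n+1) a * trunc (n+1) b) (by
    intro k hk
    rw [Polynomial.coeff_mul, coeff_trunc, if_pos (by omega), PowerSeries.coeff_mul]
    apply Finset.sum_congr rfl
    intro p hp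
    rw [Finset.HasAntidiagonal.mem_antidiagonal] at hp
    rw [coeff_trunc, coeff_trunc, if_pos (by omega), if_pos (by omega)])]
  rw [map_mul, PowerSeries.coeff_mul, PowerSeries.coeff_mul]
  apply Finset.sum_congr rfl
  intro p hp
  rw [Finset.HasAntidiagonal.mem_antidiagonal] at hp
  rw [coeff_comp_aeval a hc (show p.1 < n + 1 by omega),
    coeff_comp_aeval b hc (show p.2 < n + 1 by omega)]

lemma pow_comp {c : PowerSeries ℚ} (hc : constantCoeff c = 0) (a : PowerSeries ℚ) (k : ℕ) :
    comp (a ^ k) c = comp a c ^ k := by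
  induction k with
  | zero => simp [one_comp]
  | succ k ih => rw [pow_succ, mul_comp hc, ih, pow_succ]

lemma comp_assoc {a b c : PowerSeries ℚ} (hb : constantCoeff b = 0)
    (hc : constantCoeff c = 0) :
    comp (comp a b) c = comp a (comp b c) := by
  ext n
  rw [coeff_comp, coeff_comp]
  have step : ∀ j ∈ range (n+1), coeff j (comp a b) * coeff n (c ^ j)
      = ∑ i ∈ range (n+1), coeff i a * (coeff j (b ^ i) * coeff n (c ^ j)) := by
    intro j hj
    rw [coeff_comp_stable hb a (Finset.mem_range.mp hj), Finset.sum_mul]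
    simp [mul_assoc]
  rw [Finset.sum_congr rfl step, Finset.sum_comm]
  apply Finset.sum_congr rfl
  intro i _
  rw [← Finset.mul_sum]
  congr 1
  rw [← pow_comp hc, coeff_comp]

lemma coeff_comp_X_pow (u : PowerSeries ℚ) {m : ℕ} (hm : m ≠ 0) (i : ℕ) :
    coeff (m * i) (comp u (X ^ m)) = coeff i u := by
  rw [coeff_comp, Finset.sum_eq_single i]
  · rw [← pow_mul, coeff_X_pow, if_pos rfl, mul_one]
  · intro j _ hne
    rw [← pow_mul, coeff_X_pow,
      if_neg (fun hh => hne (Nat.eq_of_mul_eq_mul_left (Nat.pos_of_ne_zero hm) hh).symm),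
      mul_zero]
  · intro h
    exact absurd (Finset.mem_range.mpr (by nlinarith [Nat.one_le_iff_ne_zero.mpr hm])) h

lemma comp_X_pow_injective {m : ℕ} (hm : m ≠ 0) {u v : PowerSeries ℚ}
    (h : comp u (X ^ m) = comp v (X ^ m)) : u = v := by
  ext i
  rw [← coeff_comp_X_pow u hm i, ← coeff_comp_X_pow v hm i, h]

lemma unit_pow_eq_one {u : PowerSeries ℚ} {m : ℕ} (hm : m ≠ 0)
    (hu : constantCoeff u = 1) (h : u ^ m = 1) : u = 1 := by
  by_contra hne
  set v : PowerSeries ℚ := u - 1 with hv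
  have hv0 : v ≠ 0 := fun h0 => hne (by rwa [sub_eq_zero] at h0)
  have hex : ∃ k, coeff k v ≠ 0 := by
    by_contra hall
    push_neg at hall
    exact hv0 (PowerSeries.ext hall)
  classical
  let k := Nat.find hex
  have hk : coeff k v ≠ 0 := Nat.find_spec hex
  have hmin : ∀ j < k, coeff j v = 0 := fun j hj => by
    by_contra hj0
    exact absurd hj (not_lt.mpr (Nat.find_le hj0))
  have hk1 : k ≠ 0 := by
    intro h0
    apply hk
    rw [h0]
    simp [hv, hu]
  have hXk : (X : PowerSeries ℚ) ^ k ∣ v := X_pow_dvd_iff.mpr hmin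
  have hvi : ∀ i, 2 ≤ i → coeff k (v ^ i) = 0 := by
    intro i hi
    have hdv : (X : PowerSeries ℚ) ^ (k * i) ∣ v ^ i := by
      rw [pow_mul]
      exact pow_dvd_pow_of_dvd hXk i
    exact X_pow_dvd_iff.mp hdv k
      (by nlinarith [Nat.one_le_iff_ne_zero.mpr hk1])
  have hexp : u = v + 1 := by rw [hv]; ring
  have hco : coeff k (u ^ m) = (m : ℚ) * coeff k v := by
    rw [hexp, add_pow, map_sum, Finset.sum_eq_single 1]
    · rw [pow_one, one_pow, mul_one, Nat.choose_one_right, ← map_natCast C m,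
        coeff_mul_C, mul_comm]
    · intro i hi hne1
      rcases Nat.eq_zero_or_pos i with rfl | hpos
      · simp [PowerSeries.coeff_one, hk1]
      · have h2 : 2 ≤ i := by omega
        rw [one_pow, mul_one, ← map_natCast C, coeff_mul_C, hvi i h2, zero_mul]
    · intro hnot
      exact absurd (Finset.mem_range.mpr (by omega)) hnot
  rw [h, coeff_one, if_neg hk1] at hco
  exact hk (by
    rcases mul_eq_zero.mp hco.symm with h' | h'
    · exact absurd h' (Nat.cast_ne_zero.mpr hm)
    · exact h')

lemma eq_X_of_pow_eq_X_pow {w : PowerSeries ℚ} {m : ℕ} (hm : Odd m)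
    (hw : constantCoeff w = 0) (h : w ^ m = X ^ m) : w = X := by
  have hm0 : m ≠ 0 := by rintro rfl; simp [Nat.odd_iff] at hm
  obtain ⟨u, rfl⟩ := X_dvd_iff.mpr hw
  have hX : (X : PowerSeries ℚ) ^ m ≠ 0 := pow_ne_zero m X_ne_zero
  have hu1 : u ^ m = 1 := by
    have : (X : PowerSeries ℚ) ^ m * u ^ m = X ^ m * 1 := by
      rw [mul_one, ← mul_pow, h]
    exact mul_left_cancel₀ hX this
  have hc : constantCoeff u = 1 := by
    have hcm : (constantCoeff u) ^ m = 1 := by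
      have := congrArg (constantCoeff) hu1
      rwa [map_pow, map_one] at this
    have hinj := (Odd.strictMono_pow (R := ℚ) hm).injective
    have : (constantCoeff u) ^ m = (1 : ℚ) ^ m := by rw [hcm, one_pow]
    exact hinj this
  rw [unit_pow_eq_one hm0 hc hu1, mul_one]

lemma constantCoeff_comp (a c : PowerSeries ℚ) :
    constantCoeff (comp a c) = constantCoeff a := by
  rw [← coeff_zero_eq_constantCoeff_apply, ← coeff_zero_eq_constantCoeff_apply]
  simp [coeff_comp]

lemma X_pow_comp {c : PowerSeries ℚ} (hc : constantCoeff c = 0) (m : ℕ) :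
    comp (X ^ m) c = c ^ m := by
  rw [pow_comp hc, comp_X_left hc]

/-- A formal power series `f` is pseudo-involutory when its compositional
inverse is `-f(-z)`. -/
def PseudoInvolutory (f : PowerSeries ℚ) : Prop :=
  comp f (-(comp f (-X))) = X ∧ comp (-(comp f (-X))) f = X

/-- ("The Twin Powers Theorem", existence part.)  If `g(0) ≠ 0` then
`f(z) = z·g(z^{2l+1})` is pseudo-involutory if and only if
`h(z) = z·g(z)^{2l+1}` is pseudo-involutory. -/
theorem twin_powers_pseudo_involutory (g : PowerSeries ℚ) (l : ℕ)
    (hg0 : PowerSeries.constantCoeff g ≠ 0) :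
    PseudoInvolutory (X * comp g (X ^ (2 * l + 1))) ↔
      PseudoInvolutory (X * g ^ (2 * l + 1)) := by
  set m : ℕ := 2 * l + 1 with hmdef
  have hmodd : Odd m := ⟨l, by omega⟩
  have hm0 : m ≠ 0 := by omega
  set f : PowerSeries ℚ := X * comp g (X ^ m) with hfdef
  set h : PowerSeries ℚ := X * g ^ m with hhdef
  set F : PowerSeries ℚ := -(comp f (-X)) with hFdef
  set H : PowerSeries ℚ := -(comp h (-X)) with hHdef
  have hXm : constantCoeff ((X : PowerSeries ℚ) ^ m) = 0 := by
    rw [map_pow, constantCoeff_X, zero_pow hm0]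
  have hnX : constantCoeff (-(X : PowerSeries ℚ)) = 0 := by
    rw [map_neg, constantCoeff_X, neg_zero]
  have hf0 : constantCoeff f = 0 := by
    rw [hfdef, map_mul, constantCoeff_X, zero_mul]
  have hh0 : constantCoeff h = 0 := by
    rw [hhdef, map_mul, constantCoeff_X, zero_mul]
  have hF0 : constantCoeff F = 0 := by
    rw [hFdef, map_neg, constantCoeff_comp, hf0, neg_zero]
  have hH0 : constantCoeff H = 0 := by
    rw [hHdef, map_neg, constantCoeff_comp, hh0, neg_zero]
  -- Key identity K : h ∘ X^m = f^m
  have K : comp h (X ^ m) = f ^ m := by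
    rw [hhdef, mul_comp hXm, comp_X_left hXm, pow_comp hXm, hfdef, mul_pow]
  -- Key identity : F^m = H ∘ X^m
  have FmK : F ^ m = comp H (X ^ m) := by
    rw [hFdef, hmodd.neg_pow, ← pow_comp hnX, ← K, comp_assoc hXm hnX, X_pow_comp hnX,
      hmodd.neg_pow]
    have e1 : -((X : PowerSeries ℚ) ^ m) = comp (-X) (X ^ m) := by
      rw [neg_comp, comp_X_left hXm]
    rw [e1, ← comp_assoc hnX hXm, hHdef, neg_comp]
  constructor
  · rintro ⟨h1, h2⟩
    rw [← hFdef] at h1 h2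
    refine ⟨?_, ?_⟩ <;> rw [← hHdef]
    · apply comp_X_pow_injective hm0
      rw [comp_assoc hH0 hXm, ← FmK, ← X_pow_comp hF0 m, ← comp_assoc hXm hF0, K,
        pow_comp hF0, h1, comp_X_left hXm]
    · apply comp_X_pow_injective hm0
      have hFf0 : constantCoeff (comp F f) = 0 := by
        rw [constantCoeff_comp, hF0]
      rw [comp_assoc hh0 hXm, K, ← X_pow_comp hf0 m, ← comp_assoc hXm hf0, ← FmK,
        ← X_pow_comp hF0 m, comp_assoc hF0 hf0, X_pow_comp hFf0, h2, comp_X_left hXm]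
  · rintro ⟨h1, h2⟩
    rw [← hHdef] at h1 h2
    refine ⟨?_, ?_⟩ <;> rw [← hFdef]
    · apply eq_X_of_pow_eq_X_pow hmodd (by rw [constantCoeff_comp, hf0])
      rw [← pow_comp hF0, ← K, comp_assoc hXm hF0, X_pow_comp hF0, FmK,
        ← comp_assoc hH0 hXm, h1, comp_X_left hXm]
    · apply eq_X_of_pow_eq_X_pow hmodd (by rw [constantCoeff_comp, hF0])
      rw [← pow_comp hf0, FmK, comp_assoc hXm hf0, X_pow_comp hf0, ← K,
        ← comp_assoc hh0 hXm, h2, comp_X_left hXm]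
end

section
/- For indeterminates u, v and all l ≥ 0: u^{2l+1} - v^{2l+1} = Σ_{j=0}^{l} a_{l,j}·(uv)^{l-j}·(u-v)^{2j+1}, where a_{l,j} = ((2l+1)/(2j+1))·C(l+j, 2j). -/
noncomputable def gwc (l j : ℕ) : ℚ :=
  ((2 * l + 1 : ℚ) / (2 * j + 1)) * ((l + j).choose (2 * j) : ℚ)

lemma gwc_eq_zero {l j : ℕ} (h : l < j) : gwc l j = 0 := by
  unfold gwc
  rw [Nat.choose_eq_zero_of_lt (by omega)]
  simp

lemma gwc_zero (l : ℕ) : gwc l 0 = 2 * l + 1 := by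
  unfold gwc; simp

lemma keyB (l j : ℕ) :
    (2 * j + 1 : ℚ) * ((l + j + 1).choose (2 * j + 1) : ℚ) =
      ((l : ℚ) + 1 - j) * ((l + j + 1).choose (2 * j) : ℚ) := by
  rcases le_or_gt j (l + 1) with h | h
  · have := Nat.choose_succ_right_eq (l + j + 1) (2 * j)
    have h2 : l + j + 1 - 2 * j = l + 1 - j := by omega
    rw [h2] at this
    have := congrArg (Nat.cast : ℕ → ℚ) this
    push_cast [Nat.cast_sub (by omega : j ≤ l + 1)] at this
    linarith [this]
  · rw [Nat.choose_eq_zero_of_lt (by omega), Nat.choose_eq_zero_of_lt (by omega)]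
    simp

lemma gwc_rec' (l j : ℕ) :
    (2 * j + 1 : ℚ) * (2 * l + 5) * ((l + j + 3).choose (2 * j + 2) : ℚ) =
      (2 * j + 3) * (2 * l + 3) * ((l + j + 1).choose (2 * j) : ℚ)
      + 2 * (2 * j + 1) * (2 * l + 3) * ((l + j + 2).choose (2 * j + 2) : ℚ)
      - (2 * j + 1) * (2 * l + 1) * ((l + j + 1).choose (2 * j + 2) : ℚ) := by
  have p1 : (l + j + 3).choose (2 * j + 2) =
      (l + j + 2).choose (2 * j + 1) + (l + j + 2).choose (2 * j + 2) :=
    Nat.choose_succ_succ (l + j + 2) (2 * j + 1)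
  have p2 : (l + j + 2).choose (2 * j + 1) =
      (l + j + 1).choose (2 * j) + (l + j + 1).choose (2 * j + 1) :=
    Nat.choose_succ_succ (l + j + 1) (2 * j)
  have p3 : (l + j + 2).choose (2 * j + 2) =
      (l + j + 1).choose (2 * j + 1) + (l + j + 1).choose (2 * j + 2) :=
    Nat.choose_succ_succ (l + j + 1) (2 * j + 1)
  rw [p1, p2, p3]
  push_cast
  linear_combination 4 * keyB l j

lemma gwc_rec (l j : ℕ) :
    gwc (l + 2) (j + 1) = gwc (l + 1) j + 2 * gwc (l + 1) (j + 1) - gwc l (j + 1) := by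
  have h := gwc_rec' l j
  unfold gwc
  rw [show l + 2 + (j + 1) = l + j + 3 from by omega,
      show 2 * (j + 1) = 2 * j + 2 from by omega,
      show l + 1 + j = l + j + 1 from by omega,
      show l + 1 + (j + 1) = l + j + 2 from by omega,
      show l + (j + 1) = l + j + 1 from by omega]
  have h1 : (2 * (j : ℚ) + 1) ≠ 0 := by positivity
  have h3 : (2 * (j : ℚ) + 3) ≠ 0 := by positivity
  push_cast
  field_simp
  linear_combination h

lemma gw_step {R : Type*} [CommRing R] [Algebra ℚ R] (u v : R) (n : ℕ)
    (ih1 : u ^ (2*n+1) - v ^ (2*n+1)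
      = ∑ j ∈ Finset.range (n+1), gwc n j • ((u*v)^(n-j) * (u-v)^(2*j+1)))
    (ih2 : u ^ (2*(n+1)+1) - v ^ (2*(n+1)+1)
      = ∑ j ∈ Finset.range (n+2), gwc (n+1) j • ((u*v)^(n+1-j) * (u-v)^(2*j+1))) :
    u ^ (2*(n+2)+1) - v ^ (2*(n+2)+1)
      = ∑ j ∈ Finset.range (n+3), gwc (n+2) j • ((u*v)^(n+2-j) * (u-v)^(2*j+1)) := by
  simp only [Algebra.smul_def] at ih1 ih2 ⊢
  have key : u ^ (2*(n+2)+1) - v ^ (2*(n+2)+1)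
      = ((u-v)^2 + 2*(u*v)) * (u ^ (2*(n+1)+1) - v ^ (2*(n+1)+1))
        - (u*v)^2 * (u ^ (2*n+1) - v ^ (2*n+1)) := by ring
  rw [key, ih2, ih1]
  set A := algebraMap ℚ R with hAdef
  rw [Finset.sum_range_succ'
    (fun j => A (gwc (n+2) j) * ((u*v)^(n+2-j) * (u-v)^(2*j+1))) (n+2)]
  have hsplit : ∀ j ∈ Finset.range (n+2),
      A (gwc (n+2) (j+1)) * ((u*v)^(n+2-(j+1)) * (u-v)^(2*(j+1)+1))
      = A (gwc (n+1) j) * ((u*v)^(n+2-(j+1)) * (u-v)^(2*(j+1)+1))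
        + 2 * A (gwc (n+1) (j+1)) * ((u*v)^(n+2-(j+1)) * (u-v)^(2*(j+1)+1))
        - A (gwc n (j+1)) * ((u*v)^(n+2-(j+1)) * (u-v)^(2*(j+1)+1)) := by
    intro j hj
    have h2 : A 2 = 2 := map_ofNat A 2
    rw [gwc_rec n j]
    simp only [map_sub, map_add, map_mul, h2]
    ring
  rw [Finset.sum_congr rfl hsplit]
  rw [Finset.sum_sub_distrib, Finset.sum_add_distrib]
  have hA : (u-v)^2 * (∑ x ∈ Finset.range (n+2), A (gwc (n+1) x) * ((u*v)^(n+1-x) * (u-v)^(2*x+1)))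
      = ∑ x ∈ Finset.range (n+2), A (gwc (n+1) x) * ((u*v)^(n+2-(x+1)) * (u-v)^(2*(x+1)+1)) := by
    rw [Finset.mul_sum]
    refine Finset.sum_congr rfl fun x hx => ?_
    rw [show n+2-(x+1) = n+1-x from by omega]
    ring
  have hC : 2*(u*v) * (∑ x ∈ Finset.range (n+2), A (gwc (n+1) x) * ((u*v)^(n+1-x) * (u-v)^(2*x+1)))
      = ∑ x ∈ Finset.range (n+2), 2 * A (gwc (n+1) x) * ((u*v)^(n+2-x) * (u-v)^(2*x+1)) := by
    rw [Finset.mul_sum]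
    refine Finset.sum_congr rfl fun x hx => ?_
    have hx' : x ≤ n+1 := by
      have := Finset.mem_range.mp hx; omega
    rw [show n+2-x = (n+1-x)+1 from by omega]
    ring
  have hD : (u*v)^2 * (∑ x ∈ Finset.range (n+1), A (gwc n x) * ((u*v)^(n-x) * (u-v)^(2*x+1)))
      = ∑ x ∈ Finset.range (n+2), A (gwc n x) * ((u*v)^(n+2-x) * (u-v)^(2*x+1)) := by
    rw [Finset.sum_range_succ _ (n+1), gwc_eq_zero (Nat.lt_succ_self n)]
    simp only [map_zero, zero_mul, add_zero]
    rw [Finset.mul_sum]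
    refine Finset.sum_congr rfl fun x hx => ?_
    have hx' : x ≤ n := by
      have := Finset.mem_range.mp hx; omega
    rw [show n+2-x = (n-x)+2 from by omega]
    ring
  have hB : ∑ x ∈ Finset.range (n+2), 2 * A (gwc (n+1) (x+1)) * ((u*v)^(n+2-(x+1)) * (u-v)^(2*(x+1)+1))
      = (∑ x ∈ Finset.range (n+2), 2 * A (gwc (n+1) x) * ((u*v)^(n+2-x) * (u-v)^(2*x+1)))
        - 2 * A (gwc (n+1) 0) * ((u*v)^(n+2-0) * (u-v)^(2*0+1)) := by
    have h1 := Finset.sum_range_succ'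
      (fun x => 2 * A (gwc (n+1) x) * ((u*v)^(n+2-x) * (u-v)^(2*x+1))) (n+2)
    have h2 := Finset.sum_range_succ
      (fun x => 2 * A (gwc (n+1) x) * ((u*v)^(n+2-x) * (u-v)^(2*x+1))) (n+2)
    rw [h2, gwc_eq_zero (by omega : n+1 < n+2)] at h1
    simp only [map_zero, mul_zero, zero_mul, add_zero] at h1
    linear_combination -h1
  have hE : ∑ x ∈ Finset.range (n+2), A (gwc n (x+1)) * ((u*v)^(n+2-(x+1)) * (u-v)^(2*(x+1)+1))
      = (∑ x ∈ Finset.range (n+2), A (gwc n x) * ((u*v)^(n+2-x) * (u-v)^(2*x+1)))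
        - A (gwc n 0) * ((u*v)^(n+2-0) * (u-v)^(2*0+1)) := by
    have h1 := Finset.sum_range_succ'
      (fun x => A (gwc n x) * ((u*v)^(n+2-x) * (u-v)^(2*x+1))) (n+2)
    have h2 := Finset.sum_range_succ
      (fun x => A (gwc n x) * ((u*v)^(n+2-x) * (u-v)^(2*x+1))) (n+2)
    rw [h2, gwc_eq_zero (by omega : n < n+2)] at h1
    simp only [map_zero, mul_zero, zero_mul, add_zero] at h1
    linear_combination -h1
  have hz : A (gwc (n+2) 0) = 2 * A (gwc (n+1) 0) - A (gwc n 0) := by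
    have hq : gwc (n+2) 0 = 2 * gwc (n+1) 0 - gwc n 0 := by
      rw [gwc_zero, gwc_zero, gwc_zero]; push_cast; ring
    rw [hq, map_sub, map_mul, map_ofNat]
  rw [add_mul, hA, hC, hD, hB, hE]
  linear_combination (-((u*v)^(n+2-0) * (u-v)^(2*0+1))) * hz

lemma gw_main {R : Type*} [CommRing R] [Algebra ℚ R] (u v : R) (l : ℕ) :
    u ^ (2 * l + 1) - v ^ (2 * l + 1)
      = ∑ j ∈ Finset.range (l + 1), gwc l j • ((u * v) ^ (l - j) * (u - v) ^ (2 * j + 1)) := by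
  have key : ∀ m : ℕ,
      (u ^ (2 * m + 1) - v ^ (2 * m + 1)
        = ∑ j ∈ Finset.range (m + 1), gwc m j • ((u * v) ^ (m - j) * (u - v) ^ (2 * j + 1)))
      ∧ (u ^ (2 * (m + 1) + 1) - v ^ (2 * (m + 1) + 1)
        = ∑ j ∈ Finset.range (m + 2), gwc (m + 1) j • ((u * v) ^ (m + 1 - j) * (u - v) ^ (2 * j + 1))) := by
    intro m
    induction m with
    | zero =>
      constructor
      · rw [Finset.sum_range_one]
        have h0 : gwc 0 0 = 1 := by rw [gwc_zero]; norm_num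
        rw [h0, one_smul]
        norm_num
      · rw [Finset.sum_range_succ, Finset.sum_range_one]
        have h0 : gwc 1 0 = 3 := by rw [gwc_zero]; norm_num
        have h1 : gwc 1 1 = 1 := by unfold gwc; norm_num
        rw [h0, h1, one_smul, Algebra.smul_def, map_ofNat]
        norm_num
        ring
    | succ n ih =>
      exact ⟨ih.2, gw_step u v n ih.1 ih.2⟩
  exact (key l).1

/-- The Girard–Waring identity: for commuting `u`, `v` and `l ≥ 0`,
`u^{2l+1} - v^{2l+1} = Σ_{j=0}^{l} a_{l,j} (uv)^{l-j} (u-v)^{2j+1}` where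
`a_{l,j} = ((2l+1)/(2j+1))·C(l+j, 2j)`. -/
theorem girard_waring {R : Type*} [CommRing R] [Algebra ℚ R] (u v : R) (l : ℕ) :
    u ^ (2 * l + 1) - v ^ (2 * l + 1) =
      ∑ j ∈ Finset.range (l + 1),
        (((2 * l + 1 : ℚ) / (2 * j + 1)) * ((l + j).choose (2 * j) : ℚ)) •
          ((u * v) ^ (l - j) * (u - v) ^ (2 * j + 1)) := by
  have h := gw_main u v l
  simpa only [gwc] using h
end

section
/- Let t satisfy t = 1 + z·(b·t + (ac/b)·(t-1)²) for constants a,b,c with b≠0, equivalently t = 1 + (b/a)·f where f = z(a + bf + cf²). Then h = z·t is pseudo-involutory and its B-function is B_h(z) = b·C(ac·z), where C is the Catalan generating function. -/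
open PowerSeries
open Finset

lemma coeff_pow_eq_zero {g : PowerSeries ℚ} (hg : constantCoeff g = 0) {n i : ℕ}
    (h : n < i) : coeff n (g ^ i) = 0 := by
  have hX : (X : PowerSeries ℚ) ∣ g := X_dvd_iff.mpr hg
  exact X_pow_dvd_iff.mp (pow_dvd_pow_of_dvd hX i) n h

lemma coeff_comp_of_lt {g : PowerSeries ℚ} (hg : constantCoeff g = 0)
    (f : PowerSeries ℚ) {n N : ℕ} (hn : n < N) :
    coeff n (comp f g) = ∑ i ∈ range N, coeff i f * coeff n (g ^ i) := by
  rw [coeff_comp]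
  apply Finset.sum_subset (Finset.range_subset_range.mpr hn)
  intro i _ hni
  have : n < i := by simpa using hni
  rw [coeff_pow_eq_zero hg this, mul_zero]

lemma comp_add (f₁ f₂ g : PowerSeries ℚ) : comp (f₁ + f₂) g = comp f₁ g + comp f₂ g := by
  ext n
  simp [coeff_comp, add_mul, Finset.sum_add_distrib]

lemma comp_one (g : PowerSeries ℚ) : comp 1 g = 1 := by
  ext n
  rw [coeff_comp]
  rw [Finset.sum_eq_single 0]
  · simp
  · intro i _ hi
    simp [coeff_one, hi]
  · simp

lemma comp_C_mul (r : ℚ) (f g : PowerSeries ℚ) :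
    comp (C r * f) g = C r * comp f g := by
  ext n
  simp [coeff_comp, coeff_C_mul, Finset.mul_sum, mul_assoc]

lemma comp_sub (f₁ f₂ g : PowerSeries ℚ) : comp (f₁ - f₂) g = comp f₁ g - comp f₂ g := by
  ext n
  simp [coeff_comp, sub_mul, Finset.sum_sub_distrib]

lemma comp_X {g : PowerSeries ℚ} (hg : constantCoeff g = 0) : comp X g = g := by
  ext n
  rw [coeff_comp, Finset.sum_eq_single 1]
  · cases n with
    | zero => simp [coeff_X, hg]
    | succ m => simp [coeff_X]
  · intro i _ hi
    simp [coeff_X, hi]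
  · intro h
    have : n = 0 := by simpa using h
    subst this
    simp [hg]

lemma comp_mul {g : PowerSeries ℚ} (hg : constantCoeff g = 0) (f₁ f₂ : PowerSeries ℚ) :
    comp (f₁ * f₂) g = comp f₁ g * comp f₂ g := by
  ext n
  have key : ∀ (f : PowerSeries ℚ) (m : ℕ), m ≤ n →
      coeff m (comp f g) =
        coeff m (∑ i ∈ range (n + 1), C (coeff i f) * g ^ i) := by
    intro f m hm
    rw [coeff_comp_of_lt hg f (lt_of_le_of_lt hm (Nat.lt_succ_self n)), map_sum]
    simp [coeff_C_mul]
  have hRHS : coeff n (comp f₁ g * comp f₂ g) =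
      ∑ p ∈ range (n + 1) ×ˢ range (n + 1),
        coeff p.1 f₁ * coeff p.2 f₂ * coeff n (g ^ (p.1 + p.2)) := by
    rw [coeff_mul]
    have : ∀ p ∈ Finset.HasAntidiagonal.antidiagonal n,
        coeff p.1 (comp f₁ g) * coeff p.2 (comp f₂ g) =
        coeff p.1 (∑ i ∈ range (n + 1), C (coeff i f₁) * g ^ i) *
        coeff p.2 (∑ i ∈ range (n + 1), C (coeff i f₂) * g ^ i) := by
      intro p hp
      have hsum := Finset.HasAntidiagonal.mem_antidiagonal.mp hp
      rw [key f₁ p.1 (by omega), key f₂ p.2 (by omega)]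
    rw [Finset.sum_congr rfl this, ← coeff_mul, Finset.sum_mul_sum]
    calc coeff n (∑ i ∈ range (n+1), ∑ j ∈ range (n+1),
            (C (coeff i f₁) * g ^ i) * (C (coeff j f₂) * g ^ j))
        = ∑ i ∈ range (n+1), ∑ j ∈ range (n+1),
            coeff i f₁ * coeff j f₂ * coeff n (g ^ (i + j)) := by
          rw [map_sum]
          refine Finset.sum_congr rfl fun i _ => ?_
          rw [map_sum]
          refine Finset.sum_congr rfl fun j _ => ?_
          rw [mul_mul_mul_comm, ← map_mul, ← pow_add, coeff_C_mul]
      _ = ∑ p ∈ range (n + 1) ×ˢ range (n + 1),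
            coeff p.1 f₁ * coeff p.2 f₂ * coeff n (g ^ (p.1 + p.2)) := by
          rw [Finset.sum_product]
  have hLHS : coeff n (comp (f₁ * f₂) g) =
      ∑ p ∈ (range (n + 1)).biUnion Finset.HasAntidiagonal.antidiagonal,
        coeff p.1 f₁ * coeff p.2 f₂ * coeff n (g ^ (p.1 + p.2)) := by
    rw [coeff_comp, Finset.sum_biUnion]
    · refine Finset.sum_congr rfl fun k hk => ?_
      rw [coeff_mul, Finset.sum_mul]
      refine Finset.sum_congr rfl fun p hp => ?_
      rw [Finset.HasAntidiagonal.mem_antidiagonal.mp hp]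
    · intro k₁ _ k₂ _ hne
      apply Finset.disjoint_left.mpr
      intro p hp₁ hp₂
      exact hne (by rw [← Finset.HasAntidiagonal.mem_antidiagonal.mp hp₁, Finset.HasAntidiagonal.mem_antidiagonal.mp hp₂])
  rw [hLHS, hRHS]
  apply Finset.sum_subset
  · intro p hp
    simp only [Finset.mem_biUnion, Finset.mem_range, Finset.HasAntidiagonal.mem_antidiagonal] at hp
    obtain ⟨k, hk, hpk⟩ := hp
    simp only [Finset.mem_product, Finset.mem_range]
    omega
  · intro p hp hnp
    have : n < p.1 + p.2 := by
      by_contra hle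
      push_neg at hle
      exact hnp (Finset.mem_biUnion.mpr ⟨p.1 + p.2, Finset.mem_range.mpr (by omega),
        Finset.HasAntidiagonal.mem_antidiagonal.mpr rfl⟩)
    rw [coeff_pow_eq_zero hg this, mul_zero]

lemma comp_pow {g : PowerSeries ℚ} (hg : constantCoeff g = 0) (f : PowerSeries ℚ) (m : ℕ) :
    comp (f ^ m) g = (comp f g) ^ m := by
  induction m with
  | zero => simp [comp_one]
  | succ k ih => rw [pow_succ, comp_mul hg, ih, pow_succ]

lemma comp_rescale (r : ℚ) (f g : PowerSeries ℚ) :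
    comp (rescale r f) g = comp f (C r * g) := by
  ext n
  rw [coeff_comp, coeff_comp]
  refine Finset.sum_congr rfl fun i _ => ?_
  rw [coeff_rescale, mul_pow, ← map_pow, coeff_C_mul]
  ring

lemma comp_neg_X (f : PowerSeries ℚ) : comp f (-X) = rescale (-1) f := by
  have hC : ((-1 : PowerSeries ℚ)) = C (-1) := by simp
  ext n
  rw [coeff_comp, coeff_rescale, Finset.sum_eq_single n]
  · rw [neg_pow, hC, ← map_pow, coeff_C_mul, coeff_X_pow, if_pos rfl]
    ring
  · intro i _ hi
    rw [neg_pow, hC, ← map_pow, coeff_C_mul, coeff_X_pow, if_neg (fun h => hi h.symm),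
      mul_zero, mul_zero]
  · simp

lemma rescale_C' (r s : ℚ) : rescale r (C s) = C s := by
  ext n
  rw [coeff_rescale]
  by_cases h : n = 0 <;> simp [coeff_C, h]

lemma unique_sol {g d : PowerSeries ℚ} (hg : constantCoeff g = 0) (h : d = g * d) :
    d = 0 := by
  have h1 : (1 - g) * d = 0 := by
    rw [sub_mul, one_mul, ← h, sub_self]
  have h2 : (1 : PowerSeries ℚ) - g ≠ 0 := by
    intro hh
    have := congrArg (constantCoeff) hh
    simp [hg] at this
  exact (mul_eq_zero.mp h1).resolve_left h2

/-- Let `t` satisfy `t = 1 + z·(b·t + (ac/b)·(t-1)²)` with `b ≠ 0`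
(equivalently `t = 1 + (b/a)·f` where `f = z(a + bf + cf²)`).  Then
`h = z·t` is pseudo-involutory and its `B`-function is `B_h(z) = b·C(ac·z)`,
where `C` is the Catalan generating function. -/
theorem quadratic_family_B (a b c : ℚ) (hb : b ≠ 0) (t Cat : PowerSeries ℚ)
    (hCat : Cat = 1 + X * Cat ^ 2)
    (ht : t = 1 + X * (PowerSeries.C b * t + PowerSeries.C (a * c / b) * (t - 1) ^ 2)) :
    PseudoInvolutory (X * t) ∧
      (X * t) - X =
        X * (X * t) *
          comp (PowerSeries.C b * PowerSeries.rescale (a * c) Cat) (X * (X * t)) := by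
  set q : ℚ := a * c / b with hq
  -- the rescaled series
  set tb : PowerSeries ℚ := rescale (-1) t with htbdef
  have hC1 : ((-1 : PowerSeries ℚ)) = C (-1) := by simp
  -- equation for tb
  have hCneg : (C (-1) : PowerSeries ℚ) = -1 := by simp
  have htbar : tb = 1 - X * (C b * tb + C q * (tb - 1) ^ 2) := by
    rw [htbdef]
    conv_lhs => rw [ht]
    rw [map_add, map_one, map_mul, map_add, map_mul, map_mul, rescale_X, rescale_C',
      rescale_C', map_pow, map_sub, map_one, hCneg]
    ring
  -- k = X * tb
  have hbar : -(comp (X * t) (-X)) = X * tb := by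
    rw [htbdef, comp_neg_X, map_mul, rescale_X, hCneg]
    ring
  have hk0 : constantCoeff (X * tb) = 0 := by simp
  have hg0 : constantCoeff (X * t) = 0 := by simp
  -- first direction
  have part1 : comp (X * t) (X * tb) = X := by
    set T : PowerSeries ℚ := comp t (X * tb) with hTdef
    have hT : T = 1 + (X * tb) * (C b * T + C q * (T - 1) ^ 2) := by
      rw [hTdef]
      conv_lhs => rw [ht]
      rw [comp_add, comp_one, comp_mul hk0, comp_X hk0, comp_add, comp_C_mul, comp_C_mul,
        comp_pow hk0, comp_sub, comp_one]
    have hA : tb * T = tb + X * C b * tb * (tb * T) + X * C q * ((tb * T) - tb) ^ 2 := by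
      linear_combination tb * hT
    have h1 : (1 : PowerSeries ℚ) = tb + X * C b * tb * 1 + X * C q * (1 - tb) ^ 2 := by
      linear_combination -htbar
    have hd : tb * T - 1 =
        (X * C b * tb + X * C q * ((tb * T) + 1 - 2 * tb)) * (tb * T - 1) := by
      linear_combination hA - h1
    have hfac : constantCoeff (X * C b * tb + X * C q * ((tb * T) + 1 - 2 * tb)) = 0 := by
      simp [mul_assoc]
    have := unique_sol hfac hd
    have hTT : tb * T = 1 := by linear_combination this
    rw [comp_mul hk0, comp_X hk0]
    calc (X * tb) * comp t (X * tb) = X * (tb * T) := by rw [hTdef]; ring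
      _ = X := by rw [hTT, mul_one]
  -- second direction
  have part2 : comp (X * tb) (X * t) = X := by
    set T : PowerSeries ℚ := comp tb (X * t) with hTdef
    have hT : T = 1 - (X * t) * (C b * T + C q * (T - 1) ^ 2) := by
      rw [hTdef]
      conv_lhs => rw [htbar]
      rw [comp_sub, comp_one, comp_mul hg0, comp_X hg0, comp_add, comp_C_mul, comp_C_mul,
        comp_pow hg0, comp_sub, comp_one]
    have hA : t * T = t - X * C b * t * (t * T) - X * C q * ((t * T) - t) ^ 2 := by
      linear_combination t * hT
    have h1 : (1 : PowerSeries ℚ) = t - X * C b * t - X * C q * (1 - t) ^ 2 := by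
      linear_combination -ht
    have hd : t * T - 1 =
        (-(X * C b * t) - X * C q * ((t * T) + 1 - 2 * t)) * (t * T - 1) := by
      linear_combination hA - h1
    have hfac : constantCoeff (-(X * C b * t) - X * C q * ((t * T) + 1 - 2 * t)) = 0 := by
      simp [mul_assoc]
    have := unique_sol hfac hd
    have hTT : t * T = 1 := by linear_combination this
    rw [comp_mul hg0, comp_X hg0]
    calc (X * t) * comp tb (X * t) = X * (t * T) := by rw [hTdef]; ring
      _ = X := by rw [hTT, mul_one]
  constructor
  · exact ⟨by rw [hbar]; exact part1, by rw [hbar]; exact part2⟩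
  -- B-function part
  · have hw0 : constantCoeff (C (a * c) * (X * (X * t))) = 0 := by simp
    have hg20 : constantCoeff (X * (X * t)) = 0 := by simp
    set w : PowerSeries ℚ := C (a * c) * (X * (X * t)) with hw
    set Q : PowerSeries ℚ := comp Cat w with hQdef
    have hQ : Q = 1 + w * Q ^ 2 := by
      rw [hQdef]
      conv_lhs => rw [hCat]
      rw [comp_add, comp_one, comp_mul hw0, comp_X hw0, comp_pow hw0]
    have hP : comp (C b * rescale (a * c) Cat) (X * (X * t)) = C b * Q := by
      rw [comp_C_mul, comp_rescale, hQdef, hw]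
    rw [hP]
    -- v := X * t * (C b * Q) satisfies same equation as u := t - 1
    have hCq : C q * C b * C b = C (a * c) * C b := by
      rw [← map_mul, ← map_mul, ← map_mul]
      congr 1
      rw [hq]
      field_simp
    have hv : X * t * (C b * Q) =
        X * (C b * t + C q * (X * t * (C b * Q)) ^ 2) := by
      have expand : X * t * (C b * Q) = X * C b * t + C (a * c) * C b * (X ^ 3 * t ^ 2 * Q ^ 2) := by
        rw [hw] at hQ
        linear_combination (X * t * C b) * hQ
      calc X * t * (C b * Q)
          = X * C b * t + C (a * c) * C b * (X ^ 3 * t ^ 2 * Q ^ 2) := expand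
        _ = X * C b * t + C q * C b * C b * (X ^ 3 * t ^ 2 * Q ^ 2) := by rw [hCq]
        _ = X * (C b * t + C q * (X * t * (C b * Q)) ^ 2) := by ring
    have hu : t - 1 = X * (C b * t + C q * (t - 1) ^ 2) := by
      conv_lhs => rw [ht]
      ring
    have hd : (t - 1) - X * t * (C b * Q) =
        (X * C q * ((t - 1) + X * t * (C b * Q))) * ((t - 1) - X * t * (C b * Q)) := by
      linear_combination hu - hv
    have hfac : constantCoeff (X * C q * ((t - 1) + X * t * (C b * Q))) = 0 := by
      simp [mul_assoc]
    have heq := unique_sol hfac hd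
    have : t - 1 = X * t * (C b * Q) := by linear_combination heq
    linear_combination X * this
end

section
/- Let P_l(z) = Σ_{j=0}^{l} ((2l+1)/(2j+1))·C(l+j,2j)·z^j and p_k(z) = Σ_{j=0}^{k} d_{k,j}·z^j where d_{n,k} = ((n+1)/(k+1))·C(n+k+1, 2k+1). Then p_k = Σ_{l=0}^{k} P_l, and P_l(z)² = p_{2l}(z) for all l ≥ 0. -/
open Polynomial

/-- `P_l(z) = Σ_{j=0}^{l} ((2l+1)/(2j+1))·C(l+j,2j)·z^j` (rows of A111125). -/
noncomputable def Ppoly (l : ℕ) : Polynomial ℚ :=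
  ∑ j ∈ Finset.range (l + 1),
    Polynomial.C (((2 * l + 1 : ℚ) / (2 * j + 1)) * ((l + j).choose (2 * j) : ℚ)) *
      Polynomial.X ^ j

/-- `p_k(z) = Σ_{j=0}^{k} d_{k,j}·z^j` where
`d_{n,k} = ((n+1)/(k+1))·C(n+k+1, 2k+1)` (rows of A156308). -/
noncomputable def ppoly (k : ℕ) : Polynomial ℚ :=
  ∑ j ∈ Finset.range (k + 1),
    Polynomial.C (((k + 1 : ℚ) / (j + 1)) * ((k + j + 1).choose (2 * j + 1) : ℚ)) *
      Polynomial.X ^ j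

lemma cast_absorb (n r : ℕ) :
    ((n.choose (r+1) : ℚ)) * ((r:ℚ)+1) = (n.choose r : ℚ) * ((n:ℚ) - (r:ℚ)) := by
  rcases le_or_gt r n with h | h
  · have h1 := Nat.choose_succ_right_eq n r
    have h2 : ((n - r : ℕ) : ℚ) = (n:ℚ) - r := Nat.cast_sub h
    have h3 : ((n.choose (r+1) * (r+1) : ℕ) : ℚ) = ((n.choose r * (n - r) : ℕ) : ℚ) := by
      exact_mod_cast congrArg (Nat.cast (R := ℚ)) h1
    push_cast [h2] at h3
    linarith
  · rw [Nat.choose_eq_zero_of_lt h, Nat.choose_eq_zero_of_lt (h.trans (Nat.lt_succ_self r))]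
    simp

lemma cast_pascal (n k : ℕ) :
    (((n+1).choose (k+1) : ℚ)) = (n.choose k : ℚ) + (n.choose (k+1) : ℚ) := by
  exact_mod_cast Nat.choose_succ_succ n k

lemma coeff_Ppoly (l j : ℕ) :
    (Ppoly l).coeff j = (2*(l:ℚ)+1)/(2*(j:ℚ)+1) * ((l+j).choose (2*j) : ℚ) := by
  rw [Ppoly, Polynomial.finset_sum_coeff]
  simp only [Polynomial.coeff_C_mul, Polynomial.coeff_X_pow, mul_ite, mul_one, mul_zero]
  rw [Finset.sum_ite_eq (Finset.range (l+1)) j]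
  by_cases h : j ∈ Finset.range (l+1)
  · simp [h]
  · simp only [h, if_false]
    rw [Nat.choose_eq_zero_of_lt (by simp at h; omega)]
    simp

lemma coeff_ppoly (k j : ℕ) :
    (ppoly k).coeff j = ((k:ℚ)+1)/((j:ℚ)+1) * ((k+j+1).choose (2*j+1) : ℚ) := by
  rw [ppoly, Polynomial.finset_sum_coeff]
  simp only [Polynomial.coeff_C_mul, Polynomial.coeff_X_pow, mul_ite, mul_one, mul_zero]
  rw [Finset.sum_ite_eq (Finset.range (k+1)) j]
  by_cases h : j ∈ Finset.range (k+1)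
  · simp [h]
  · simp only [h, if_false]
    rw [Nat.choose_eq_zero_of_lt (by simp at h; omega)]
    simp

lemma part1_id (k j : ℕ) :
    ((k:ℚ)+2)/((j:ℚ)+1) * ((k+j+2).choose (2*j+1) : ℚ)
      = ((k:ℚ)+1)/((j:ℚ)+1) * ((k+j+1).choose (2*j+1) : ℚ)
        + (2*(k:ℚ)+3)/(2*(j:ℚ)+1) * ((k+j+1).choose (2*j) : ℚ) := by
  have hpas : ((k+j+2).choose (2*j+1) : ℚ)
      = ((k+j+1).choose (2*j) : ℚ) + ((k+j+1).choose (2*j+1) : ℚ) := by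
    have := cast_pascal (k+j+1) (2*j)
    convert this using 2
  have habs := cast_absorb (k+j+1) (2*j)
  push_cast at habs
  have hj1 : ((j:ℚ)+1) ≠ 0 := by positivity
  have hj2 : (2*(j:ℚ)+1) ≠ 0 := by positivity
  rw [hpas]
  field_simp
  ring_nf
  ring_nf at habs
  linear_combination habs

lemma r1_id (l j : ℕ) :
    (2*(l:ℚ)+5)/(2*(j:ℚ)+3) * ((l+j+3).choose (2*j+2) : ℚ)
      = (2*(l:ℚ)+3)/(2*(j:ℚ)+1) * ((l+j+1).choose (2*j) : ℚ)
        + 2*(2*(l:ℚ)+3)/(2*(j:ℚ)+3) * ((l+j+2).choose (2*j+2) : ℚ)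
        - (2*(l:ℚ)+1)/(2*(j:ℚ)+3) * ((l+j+1).choose (2*j+2) : ℚ) := by
  have hp1 : ((l+j+2).choose (2*j+2) : ℚ)
      = ((l+j+1).choose (2*j+1) : ℚ) + ((l+j+1).choose (2*j+2) : ℚ) := by
    have := cast_pascal (l+j+1) (2*j+1); convert this using 2
  have hp2 : ((l+j+3).choose (2*j+2) : ℚ)
      = ((l+j+2).choose (2*j+1) : ℚ) + ((l+j+2).choose (2*j+2) : ℚ) := by
    have := cast_pascal (l+j+2) (2*j+1); convert this using 2
  have hp3 : ((l+j+2).choose (2*j+1) : ℚ)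
      = ((l+j+1).choose (2*j) : ℚ) + ((l+j+1).choose (2*j+1) : ℚ) := by
    have := cast_pascal (l+j+1) (2*j); convert this using 2
  have habs := cast_absorb (l+j+1) (2*j)
  push_cast at habs
  have hj1 : (2*(j:ℚ)+1) ≠ 0 := by positivity
  have hj2 : (2*(j:ℚ)+3) ≠ 0 := by positivity
  rw [hp2, hp3, hp1]
  field_simp
  linear_combination (4*(2*(j:ℚ)+3)^2 - 16*((j:ℚ)+1)*((j:ℚ)+2)) * habs

lemma r2_id (k j : ℕ) :
    ((k:ℚ)+3)/((j:ℚ)+2) * ((k+j+4).choose (2*j+3) : ℚ)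
      = ((k:ℚ)+2)/((j:ℚ)+1) * ((k+j+2).choose (2*j+1) : ℚ)
        + 2*((k:ℚ)+2)/((j:ℚ)+2) * ((k+j+3).choose (2*j+3) : ℚ)
        - ((k:ℚ)+1)/((j:ℚ)+2) * ((k+j+2).choose (2*j+3) : ℚ) := by
  have hp1 : ((k+j+3).choose (2*j+3) : ℚ)
      = ((k+j+2).choose (2*j+2) : ℚ) + ((k+j+2).choose (2*j+3) : ℚ) := by
    have := cast_pascal (k+j+2) (2*j+2); convert this using 2
  have hp2 : ((k+j+4).choose (2*j+3) : ℚ)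
      = ((k+j+3).choose (2*j+2) : ℚ) + ((k+j+3).choose (2*j+3) : ℚ) := by
    have := cast_pascal (k+j+3) (2*j+2); convert this using 2
  have hp3 : ((k+j+3).choose (2*j+2) : ℚ)
      = ((k+j+2).choose (2*j+1) : ℚ) + ((k+j+2).choose (2*j+2) : ℚ) := by
    have := cast_pascal (k+j+2) (2*j+1); convert this using 2
  have habs := cast_absorb (k+j+2) (2*j+1)
  push_cast at habs
  have hj1 : ((j:ℚ)+1) ≠ 0 := by positivity
  have hj2 : ((j:ℚ)+2) ≠ 0 := by positivity
  rw [hp2, hp3, hp1]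
  field_simp
  linear_combination (((j:ℚ)+2)^2 - ((j:ℚ)+1)*((j:ℚ)+3)) * habs

lemma Ppoly_rec (l : ℕ) :
    Ppoly (l+2) = X * Ppoly (l+1) + 2 * Ppoly (l+1) - Ppoly l := by
  ext j
  rcases j with _ | j
  · simp only [Polynomial.coeff_sub, Polynomial.coeff_add, Polynomial.mul_coeff_zero,
      Polynomial.coeff_X_zero, zero_mul, zero_add, Polynomial.coeff_ofNat_zero]
    simp only [coeff_Ppoly]
    norm_num
    push_cast
    ring
  · have h2 : ((2 : ℚ[X]) * Ppoly (l+1)).coeff (j+1) = 2 * (Ppoly (l+1)).coeff (j+1) := by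
      simp
    rw [Polynomial.coeff_sub, Polynomial.coeff_add, Polynomial.coeff_X_mul, h2]
    simp only [coeff_Ppoly]
    have e1 : l+2+(j+1) = l+j+3 := by omega
    have e2 : 2*(j+1) = 2*j+2 := by omega
    have e3 : l+1+j = l+j+1 := by omega
    have e4 : l+1+(j+1) = l+j+2 := by omega
    have e5 : l+(j+1) = l+j+1 := by omega
    rw [e1, e2, e3, e4, e5]
    push_cast
    linear_combination r1_id l j

lemma ppoly_rec (k : ℕ) :
    ppoly (k+2) = X * ppoly (k+1) + 2 * ppoly (k+1) - ppoly k + 2 := by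
  ext j
  rcases j with _ | j
  · simp only [Polynomial.coeff_add, Polynomial.coeff_sub, Polynomial.mul_coeff_zero,
      Polynomial.coeff_X_zero, zero_mul, zero_add, Polynomial.coeff_ofNat_zero]
    simp only [coeff_ppoly]
    norm_num [Nat.choose_one_right]
    push_cast
    ring
  · have h2 : ((2 : ℚ[X]) * ppoly (k+1)).coeff (j+1) = 2 * (ppoly (k+1)).coeff (j+1) := by
      simp
    have h3 : ((2 : ℚ[X])).coeff (j+1) = 0 := by
      simp [Polynomial.coeff_ofNat_succ]
    rw [Polynomial.coeff_add, Polynomial.coeff_sub, Polynomial.coeff_add,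
      Polynomial.coeff_X_mul, h2, h3]
    simp only [coeff_ppoly]
    have e1 : k+2+(j+1)+1 = k+j+4 := by omega
    have e2 : 2*(j+1)+1 = 2*j+3 := by omega
    have e3 : k+1+j+1 = k+j+2 := by omega
    have e4 : k+1+(j+1)+1 = k+j+3 := by omega
    have e5 : k+(j+1)+1 = k+j+2 := by omega
    rw [e1, e2, e3, e4, e5]
    push_cast
    linear_combination r2_id k j

lemma part1_step (k : ℕ) : ppoly (k+1) = ppoly k + Ppoly (k+1) := by
  ext j
  rw [Polynomial.coeff_add]
  simp only [coeff_ppoly, coeff_Ppoly]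
  have e1 : k+1+j+1 = k+j+2 := by omega
  have e2 : k+1+j = k+j+1 := by omega
  rw [e1, e2]
  push_cast
  linear_combination part1_id k j

lemma Ppoly_zero : Ppoly 0 = 1 := by
  simp [Ppoly]

lemma Ppoly_one : Ppoly 1 = X + 3 := by
  rw [Ppoly]
  rw [Finset.sum_range_succ, Finset.sum_range_succ, Finset.sum_range_zero]
  norm_num [Nat.choose]
  simp [map_ofNat]
  ring

lemma Ppoly_two : Ppoly 2 = X^2 + 5*X + 5 := by
  rw [Ppoly]
  rw [Finset.sum_range_succ, Finset.sum_range_succ, Finset.sum_range_succ,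
    Finset.sum_range_zero]
  norm_num [Nat.choose]
  simp [map_ofNat]
  ring

lemma ppoly_zero : ppoly 0 = 1 := by
  simp [ppoly]

lemma ppoly_two : ppoly 2 = X^2 + 6*X + 9 := by
  rw [ppoly]
  rw [Finset.sum_range_succ, Finset.sum_range_succ, Finset.sum_range_succ,
    Finset.sum_range_zero]
  norm_num [Nat.choose]
  simp [map_ofNat]
  ring

lemma ppoly_three : ppoly 3 = X^3 + 8*X^2 + 20*X + 16 := by
  rw [ppoly]
  rw [Finset.sum_range_succ, Finset.sum_range_succ, Finset.sum_range_succ,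
    Finset.sum_range_succ, Finset.sum_range_zero]
  norm_num [Nat.choose]
  simp [map_ofNat]
  ring

lemma main_G (l : ℕ) :
    (Ppoly (l+1))^2 = ppoly (2*l+2) ∧
      Ppoly (l+2) * Ppoly (l+1) = ppoly (2*l+3) - 1 ∧
      Ppoly (l+2) * Ppoly l = ppoly (2*l+2) - X - 4 := by
  induction l with
  | zero =>
    refine ⟨?_, ?_, ?_⟩
    · rw [Ppoly_one]; norm_num [ppoly_two]; ring
    · rw [Ppoly_two, Ppoly_one]; norm_num [ppoly_three]; ring
    · rw [Ppoly_two, Ppoly_zero]; norm_num [ppoly_two]; ring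
  | succ n ih =>
    obtain ⟨h1, h2, h3⟩ := ih
    have hA := Ppoly_rec n
    have hA' := Ppoly_rec (n+1)
    have hB : ppoly (2*n+4) = X * ppoly (2*n+3) + 2 * ppoly (2*n+3) - ppoly (2*n+2) + 2 := by
      have := ppoly_rec (2*n+2)
      convert this using 2 <;> omega
    have k1 : (Ppoly (n+2))^2 = ppoly (2*n+4) := by
      linear_combination (Ppoly (n+2)) * hA + (X + 2) * h2 - h3 - hB
    have k3 : Ppoly (n+3) * Ppoly (n+1) = ppoly (2*n+4) - X - 4 := by
      linear_combination (Ppoly (n+1)) * hA' + (X + 2) * h2 - h1 - hB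
    have hB' : ppoly (2*n+5) = X * ppoly (2*n+4) + 2 * ppoly (2*n+4) - ppoly (2*n+3) + 2 := by
      have := ppoly_rec (2*n+3)
      convert this using 2 <;> omega
    have k2 : Ppoly (n+3) * Ppoly (n+2) = ppoly (2*n+5) - 1 := by
      linear_combination (Ppoly (n+2)) * hA' + (X + 2) * k1 - h2 - hB'
    refine ⟨?_, ?_, ?_⟩
    · have e : 2*(n+1)+2 = 2*n+4 := by omega
      rw [e]; exact k1
    · have e : 2*(n+1)+3 = 2*n+5 := by omega
      rw [e]; exact k2
    · have e : 2*(n+1)+2 = 2*n+4 := by omega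
      rw [e]; exact k3

/-- `p_k = Σ_{l=0}^{k} P_l`, and `P_l² = p_{2l}` for all `l ≥ 0`. -/
theorem ppoly_Ppoly_relations :
    (∀ k : ℕ, ppoly k = ∑ l ∈ Finset.range (k + 1), Ppoly l) ∧
      ∀ l : ℕ, (Ppoly l) ^ 2 = ppoly (2 * l) := by
  constructor
  · intro k
    induction k with
    | zero => simp [ppoly_zero, Ppoly_zero]
    | succ n ih =>
      rw [Finset.sum_range_succ, ← ih, part1_step]
  · intro l
    rcases l with _ | n
    · simp [ppoly_zero, Ppoly_zero]
    · have e : 2*(n+1) = 2*n+2 := by omega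
      rw [e]
      exact (main_G n).1
end
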